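/- Let F be a proper subfield of a field K of characteristic 0. Let p(x) = Σ_{k=0}^n a_k x^k ∈ K[x] with a_n ≠ 0, and let q(x) = Σ_{j=0}^m b_j x^j be a polynomial all of whose coefficients lie in F, with b_m ≠ 0. Then D_F(p ∘ q) = D_F(p) · D_F(q). -/

import Mathlib

open Polynomial

/-- The `F`-deficit of a polynomial `p`: `natDegree p` minus the largest index
of a coefficient not lying in `F`. When all coefficients lie in `F`, the set
below is empty, `sSup ∅ = 0`, and the deficit equals `natDegree p`. -/
noncomputable def deficit {K : Type*} [Field K] (F : Subfield K) (p : K[X]) : ℕ :=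
  p.natDegree - sSup {k : ℕ | p.coeff k ∉ F}

private lemma comp_coeff_mem {K : Type*} [Field K] (F : Subfield K) (f g : K[X])
    (hf : ∀ j, f.coeff j ∈ F) (hg : ∀ j, g.coeff j ∈ F) (j : ℕ) :
    (f.comp g).coeff j ∈ F := by
  have hf2 : ∀ k : ℕ, f.coeff k ∈ Set.range ⇑(F.subtype) := fun k => ⟨⟨f.coeff k, hf k⟩, rfl⟩
  have hg2 : ∀ k : ℕ, g.coeff k ∈ Set.range ⇑(F.subtype) := fun k => ⟨⟨g.coeff k, hg k⟩, rfl⟩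
  obtain ⟨f', hf'⟩ := (Polynomial.mem_lifts f).1 ((lifts_iff_coeff_lifts f).2 hf2)
  obtain ⟨g', hg'⟩ := (Polynomial.mem_lifts g).1 ((lifts_iff_coeff_lifts g).2 hg2)
  have : f.comp g = (f'.comp g').map F.subtype := by
    rw [Polynomial.map_comp, hf', hg']
  rw [this, coeff_map]
  exact SetLike.coe_mem _

theorem stmt2 {K : Type*} [Field K] [CharZero K] (F : Subfield K) (hF : F ≠ ⊤)
    (p q : K[X]) (hp : p ≠ 0) (hq : q ≠ 0)
    (hqF : ∀ j, q.coeff j ∈ F) :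
    deficit F (p.comp q) = deficit F p * deficit F q := by
  classical
  set n := p.natDegree with hn
  set m := q.natDegree with hm
  have hSq : {k : ℕ | q.coeff k ∉ F} = ∅ := by
    ext k; simp [hqF k]
  have hdq : deficit F q = m := by
    simp [deficit, hSq, ← hm]
  rw [hdq]
  -- case m = 0
  rcases eq_or_ne m 0 with hm0 | hm0
  · have : (p.comp q).natDegree = 0 := by
      rw [natDegree_comp, ← hm, hm0, mul_zero]
    simp [deficit, this, hm0]
  -- the set of "bad" indices of p
  set S : Set ℕ := {k : ℕ | p.coeff k ∉ F} with hS
  have hSbdd : BddAbove S := by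
    refine ⟨n, fun k hk => ?_⟩
    by_contra h
    exact hk (by
      rw [coeff_eq_zero_of_natDegree_lt (lt_of_not_ge h)]
      exact F.zero_mem)
  rcases Set.eq_empty_or_nonempty S with hSe | hSne
  · -- all coefficients of p lie in F
    have hpF : ∀ j, p.coeff j ∈ F := by
      intro j
      by_contra h
      exact Set.eq_empty_iff_forall_notMem.1 hSe j h
    have hScomp : {k : ℕ | (p.comp q).coeff k ∉ F} = ∅ := by
      ext k; simp [comp_coeff_mem F p q hpF hqF k]
    have h0 : sSup {k : ℕ | p.coeff k ∉ F} = 0 := by rw [← hS, hSe]; simp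
    simp [deficit, hScomp, h0, natDegree_comp, ← hn, ← hm]
  · -- there is a bad coefficient
    set s := sSup S with hs
    have hsmem : s ∈ S := Nat.sSup_mem hSne hSbdd
    have has : p.coeff s ∉ F := hsmem
    have has0 : p.coeff s ≠ 0 := fun h => has (h ▸ F.zero_mem)
    have hub : ∀ k ∈ S, k ≤ s := fun k hk => le_csSup hSbdd hk
    have hgt : ∀ k, s < k → p.coeff k ∈ F := by
      intro k hk
      by_contra h
      exact absurd (hub k h) (not_le.2 hk)
    -- split p into low and high parts
    set pLow : K[X] := ∑ i ∈ Finset.range (s + 1), monomial i (p.coeff i) with hpLow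
    set pHigh : K[X] := p - pLow with hpHigh
    have hLowCoeff : ∀ k, pLow.coeff k = if k ≤ s then p.coeff k else 0 := by
      intro k
      rw [hpLow, finset_sum_coeff]
      simp only [coeff_monomial]
      rw [Finset.sum_ite_eq' (Finset.range (s + 1)) k]
      simp [Nat.lt_succ_iff]
    have hHighCoeff : ∀ k, pHigh.coeff k ∈ F := by
      intro k
      rw [hpHigh, coeff_sub, hLowCoeff]
      by_cases hk : k ≤ s
      · simp only [hk, if_true, sub_self]
        exact F.zero_mem
      · simp only [hk, if_false, sub_zero]
        exact hgt k (not_le.1 hk)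
    have hLowDeg : pLow.natDegree = s := by
      apply le_antisymm
      · apply natDegree_le_iff_coeff_eq_zero.2
        intro k hk
        rw [hLowCoeff]
        simp [not_le.2 hk]
      · apply le_natDegree_of_ne_zero
        rw [hLowCoeff]
        simpa using has0
    have hLowLead : pLow.leadingCoeff = p.coeff s := by
      rw [leadingCoeff, hLowDeg, hLowCoeff]; simp
    have hqlead : q.leadingCoeff ≠ 0 := leadingCoeff_ne_zero.2 hq
    have hcomp : p.comp q = pLow.comp q + pHigh.comp q := by
      rw [hpHigh, sub_comp]; ring
    -- the key coefficient
    have hkey : (p.comp q).coeff (s * m) ∉ F := by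
      have h1 : (pLow.comp q).coeff (s * m) = p.coeff s * q.leadingCoeff ^ s := by
        have := coeff_comp_degree_mul_degree (p := pLow) (q := q) hm0
        rwa [hLowDeg, hLowLead, ← hm] at this
      intro hmem
      rw [hcomp, coeff_add, h1] at hmem
      have h2 : (pHigh.comp q).coeff (s * m) ∈ F :=
        comp_coeff_mem F pHigh q hHighCoeff hqF _
      have h3 : p.coeff s * q.leadingCoeff ^ s ∈ F := by
        have := F.sub_mem hmem h2
        simpa using this
      have h4 : q.leadingCoeff ^ s ∈ F := F.pow_mem (hqF m) s
      have h5 : (q.leadingCoeff ^ s)⁻¹ ∈ F := F.inv_mem h4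
      have h6 : p.coeff s = (p.coeff s * q.leadingCoeff ^ s) * (q.leadingCoeff ^ s)⁻¹ := by
        field_simp
      exact has (h6 ▸ F.mul_mem h3 h5)
    -- coefficients above s*m lie in F
    have habove : ∀ k, s * m < k → (p.comp q).coeff k ∈ F := by
      intro k hk
      have hdegLow : (pLow.comp q).natDegree = s * m := by
        rw [natDegree_comp, hLowDeg, ← hm]
      have h1 : (pLow.comp q).coeff k = 0 :=
        coeff_eq_zero_of_natDegree_lt (hdegLow ▸ hk)
      rw [hcomp, coeff_add, h1, zero_add]
      exact comp_coeff_mem F pHigh q hHighCoeff hqF k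
    -- compute the sSup for the composite
    have hScomp : sSup {k : ℕ | (p.comp q).coeff k ∉ F} = s * m := by
      have hub' : ∀ k ∈ {k : ℕ | (p.comp q).coeff k ∉ F}, k ≤ s * m := by
        intro k hk
        by_contra h
        exact hk (habove k (not_le.1 h))
      exact le_antisymm (csSup_le ⟨s * m, hkey⟩ hub') (le_csSup ⟨s * m, hub'⟩ hkey)
    show (p.comp q).natDegree - sSup {k : ℕ | (p.comp q).coeff k ∉ F} = (n - s) * m
    rw [hScomp, natDegree_comp, ← hn, ← hm, Nat.sub_mul]
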